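/- For every p with 5/6 < p < 1: π₃(y) > y for all y ∈ [0, y₋(p)), π₃(y) < y for all y ∈ (y₋(p), 1/2), π₃(y) > y for all y ∈ (1/2, y₊(p)), and π₃(y) < y for all y ∈ (y₊(p), 1], where y_±(p) = 1/2 ± √(12p² − 16p + 5)/(2(2p−1)). That is, y₋ and y₊ are down-crossings of the diagonal and 1/2 is an up-crossing. -/
import Mathlib


/-- The urn function of the ERW with `k = 3` extractions:
`π₃(y) = (1-p) + (2p-1)(3y² - 2y³)`. -/
noncomputable def pi3 (p y : ℝ) : ℝ :=
  (1 - p) + (2 * p - 1) * (3 * y ^ 2 - 2 * y ^ 3)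

/-- The lower nontrivial fixed point `y₋(p)`. -/
noncomputable def yMinus (p : ℝ) : ℝ :=
  1 / 2 - Real.sqrt (12 * p ^ 2 - 16 * p + 5) / (2 * (2 * p - 1))

/-- The upper nontrivial fixed point `y₊(p)`. -/
noncomputable def yPlus (p : ℝ) : ℝ :=
  1 / 2 + Real.sqrt (12 * p ^ 2 - 16 * p + 5) / (2 * (2 * p - 1))

set_option maxHeartbeats 1000000 in
theorem stmt_13 (p : ℝ) (hp0 : 5 / 6 < p) (hp1 : p < 1) :
    (∀ y : ℝ, 0 ≤ y → y < yMinus p → y < pi3 p y) ∧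
    (∀ y : ℝ, yMinus p < y → y < 1 / 2 → pi3 p y < y) ∧
    (∀ y : ℝ, 1 / 2 < y → y < yPlus p → y < pi3 p y) ∧
    (∀ y : ℝ, yPlus p < y → y ≤ 1 → pi3 p y < y) := by
  have hc : (0:ℝ) < 2 * p - 1 := by linarith
  have hD : (0:ℝ) ≤ 12 * p ^ 2 - 16 * p + 5 := by nlinarith
  set s : ℝ := Real.sqrt (12 * p ^ 2 - 16 * p + 5) with hs_def
  have hs0 : 0 ≤ s := Real.sqrt_nonneg _
  have hs2 : s ^ 2 = 12 * p ^ 2 - 16 * p + 5 := Real.sq_sqrt hD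
  have hsc : s < 2 * p - 1 := by nlinarith
  have hdiv : s / (2 * (2 * p - 1)) * (2 * (2 * p - 1)) = s :=
    div_mul_cancel₀ s (by positivity)
  have hkey : ∀ y : ℝ, 4 * (2 * p - 1) ^ 2 * (pi3 p y - y) =
      (2 * (2 * p - 1) * (y - 1/2)) * (s - 2 * (2 * p - 1) * (y - 1/2)) *
        (s + 2 * (2 * p - 1) * (y - 1/2)) := by
    intro y
    unfold pi3
    linear_combination (-(2 * (2 * p - 1) * (y - 1/2))) * hs2
  have h4c : (0:ℝ) < 4 * (2 * p - 1) ^ 2 := by positivity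
  refine ⟨?_, ?_, ?_, ?_⟩
  · intro y hy0 hy1
    unfold yMinus at hy1
    rw [← hs_def] at hy1
    have hu : 2 * (2 * p - 1) * (y - 1/2) < -s := by nlinarith
    have h1 : 0 < -(2 * (2 * p - 1) * (y - 1/2)) := by linarith
    have h2 : 0 < s - 2 * (2 * p - 1) * (y - 1/2) := by linarith
    have h3 : 0 < -(s + 2 * (2 * p - 1) * (y - 1/2)) := by linarith
    have hP := mul_pos (mul_pos h1 h2) h3
    have h5 : 0 < 4 * (2 * p - 1) ^ 2 * (pi3 p y - y) := by rw [hkey y]; nlinarith [hP]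
    nlinarith [h5, h4c]
  · intro y hy1 hy2
    unfold yMinus at hy1
    rw [← hs_def] at hy1
    have hu1 : -s < 2 * (2 * p - 1) * (y - 1/2) := by nlinarith
    have hu2 : 2 * (2 * p - 1) * (y - 1/2) < 0 := by nlinarith
    have h1 : 0 < -(2 * (2 * p - 1) * (y - 1/2)) := by linarith
    have h2 : 0 < s - 2 * (2 * p - 1) * (y - 1/2) := by linarith
    have h3 : 0 < s + 2 * (2 * p - 1) * (y - 1/2) := by linarith
    have hP := mul_pos (mul_pos h1 h2) h3
    have h5 : 4 * (2 * p - 1) ^ 2 * (pi3 p y - y) < 0 := by rw [hkey y]; nlinarith [hP]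
    nlinarith [h5, h4c]
  · intro y hy1 hy2
    unfold yPlus at hy2
    rw [← hs_def] at hy2
    have hu1 : 0 < 2 * (2 * p - 1) * (y - 1/2) :=
      mul_pos (by linarith) (by linarith)
    have hu2 : 2 * (2 * p - 1) * (y - 1/2) < s := by nlinarith
    have h2 : 0 < s - 2 * (2 * p - 1) * (y - 1/2) := by linarith
    have h3 : 0 < s + 2 * (2 * p - 1) * (y - 1/2) := by linarith
    have hP := mul_pos (mul_pos hu1 h2) h3
    have h5 : 0 < 4 * (2 * p - 1) ^ 2 * (pi3 p y - y) := by rw [hkey y]; nlinarith [hP]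
    nlinarith [h5, h4c]
  · intro y hy1 hy2
    unfold yPlus at hy1
    rw [← hs_def] at hy1
    have hu : s < 2 * (2 * p - 1) * (y - 1/2) := by nlinarith
    have h1 : 0 < 2 * (2 * p - 1) * (y - 1/2) := by linarith
    have h2 : 0 < 2 * (2 * p - 1) * (y - 1/2) - s := by linarith
    have h3 : 0 < s + 2 * (2 * p - 1) * (y - 1/2) := by linarith
    have hP := mul_pos (mul_pos h1 h2) h3
    have h5 : 4 * (2 * p - 1) ^ 2 * (pi3 p y - y) < 0 := by rw [hkey y]; nlinarith [hP]
    nlinarith [h5, h4c]
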